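/- Let μ, κ > 0 and define f : (0, μ) → ℝ by f(λ) = λ(μ − λ)/(κ + μ − λ) (the capacity in bits per second of the erasure queue-channel with exponential decoherence parameter κ over a stationary M/M/1 queue with service rate μ). Then λ* = (κ + μ) − √(κ(κ + μ)) lies in the open interval (0, μ), f attains its maximum over (0, μ) at λ = λ*, and the maximum value is f(λ*) = (√(κ + μ) − √κ)². In particular, for μ = 1 and κ = 0.1, λ* = 1.1 − √0.11 ≈ 0.77 and f(λ*) ≈ 0.54. -/
import Mathlib


/-- **Statement 12.** For `mu, kappa > 0`, the capacity function
`f lam = lam (mu - lam) / (kappa + mu - lam)` of the erasure queue-channel over a stationary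
M/M/1 queue attains its maximum over the admissible arrival rates `lam ∈ (0, mu)` at
`lam* = (kappa + mu) - √(kappa (kappa + mu)) ∈ (0, mu)`, with maximum value
`f lam* = (√(kappa + mu) - √kappa)²`. In particular, for `mu = 1` and `kappa = 0.1`,
`lam* = 1.1 - √0.11 ≈ 0.77` and `f lam* ≈ 0.54`. -/
theorem eqc_optimal_arrival_rate
    (mu kappa : ℝ) (hmu : 0 < mu) (hkappa : 0 < kappa)
    (f : ℝ → ℝ) (hf : ∀ lam, f lam = lam * (mu - lam) / (kappa + mu - lam))
    (lamstar : ℝ) (hstar : lamstar = (kappa + mu) - Real.sqrt (kappa * (kappa + mu))) :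
    lamstar ∈ Set.Ioo 0 mu ∧
    (∀ lam ∈ Set.Ioo (0 : ℝ) mu, f lam ≤ f lamstar) ∧
    f lamstar = (Real.sqrt (kappa + mu) - Real.sqrt kappa) ^ 2 ∧
    (mu = 1 → kappa = 0.1 →
      lamstar = 1.1 - Real.sqrt 0.11 ∧ |lamstar - 0.77| < 0.01 ∧ |f lamstar - 0.54| < 0.01) := by
  have hcpos : (0:ℝ) < kappa + mu := by linarith
  set s := Real.sqrt (kappa * (kappa + mu)) with hs
  have hspos : 0 < s := Real.sqrt_pos.2 (by positivity)
  have hs2 : s ^ 2 = kappa * (kappa + mu) := Real.sq_sqrt (by positivity)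
  have hsk : kappa < s := by nlinarith
  have hsc : s < kappa + mu := by nlinarith
  have ha : Real.sqrt (kappa + mu) ^ 2 = kappa + mu := Real.sq_sqrt hcpos.le
  have hb : Real.sqrt kappa ^ 2 = kappa := Real.sq_sqrt hkappa.le
  have hsab : s = Real.sqrt kappa * Real.sqrt (kappa + mu) := by
    rw [hs, Real.sqrt_mul hkappa.le]
  have hmem : lamstar ∈ Set.Ioo 0 mu := by
    constructor
    · rw [hstar]; linarith
    · rw [hstar]; linarith
  have hval : (Real.sqrt (kappa + mu) - Real.sqrt kappa) ^ 2 = kappa + mu + kappa - 2 * s := by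
    rw [hsab]; nlinarith [ha, hb]
  have key : f lamstar = (Real.sqrt (kappa + mu) - Real.sqrt kappa) ^ 2 := by
    rw [hf, hstar, hval]
    have hd : kappa + mu - ((kappa + mu) - s) = s := by ring
    rw [hd, div_eq_iff hspos.ne']
    nlinarith [hs2]
  refine ⟨hmem, ?_, key, ?_⟩
  · intro lam hlam
    rw [hf, key, hval]
    have hd : 0 < kappa + mu - lam := by linarith [hlam.2]
    rw [div_le_iff₀ hd]
    nlinarith [sq_nonneg (kappa + mu - lam - s), hs2]
  · intro h1 h2
    subst h1; subst h2
    have hs011 : s = Real.sqrt 0.11 := by rw [hs]; norm_num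
    have hls : lamstar = 1.1 - Real.sqrt 0.11 := by
      rw [hstar, hs011]; norm_num
    have hub : Real.sqrt 0.11 < 0.335 := by
      rw [show (0.335:ℝ) = Real.sqrt (0.335^2) by rw [Real.sqrt_sq]; norm_num]
      exact Real.sqrt_lt_sqrt (by norm_num) (by norm_num)
    have hlb : (0.33:ℝ) < Real.sqrt 0.11 := by
      rw [show (0.33:ℝ) = Real.sqrt (0.33^2) by rw [Real.sqrt_sq]; norm_num]
      exact Real.sqrt_lt_sqrt (by norm_num) (by norm_num)
    refine ⟨hls, ?_, ?_⟩
    · rw [hls, abs_lt]; constructor <;> nlinarith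
    · have hkey : f lamstar = 1.2 - 2 * Real.sqrt 0.11 := by
        rw [key, hval, hs011]; norm_num
      rw [hkey, abs_lt]; constructor <;> nlinarith
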